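/- Let μ > 0, c > 0, ε > 0, let f : ℝ^d → ℝ be μ-strongly convex with minimizer x* and ∇f(x*) = 0, and let R₀ ≥ ‖x⁰ − x*‖ with μR₀² > 2ε. Let (x̂^t)_{t≥0} be a sequence of random vectors with x̂⁰ = x⁰ such that for every t ≥ 1 there are γ_t, K_t > 0 with γ_t·K_t ≥ 4c/μ and E[f(x̂^t) − f(x*) | x̂^{t−1}] ≤ c·‖x̂^{t−1} − x*‖²/(γ_t·K_t). Then for every t ≥ 1, E[f(x̂^t) − f(x*)] ≤ μR₀²/2^{t+1} and E[‖x̂^t − x*‖²] ≤ R₀²/2^t; in particular, after r = ⌈log₂(μR₀²/ε)⌉ − 1 restarts, E[f(x̂^r) − f(x*)] ≤ ε. -/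

import Mathlib

open MeasureTheory ProbabilityTheory
open scoped RealInnerProductSpace

noncomputable section

/-- The restart argument underlying Restarted-BTARD-SGD: if each stage `t`
satisfies `E[f(x̂^t) − f(x*) | x̂^{t−1}] ≤ c‖x̂^{t−1} − x*‖²/(γ_t K_t)` with
`γ_t K_t ≥ 4c/μ`, then `E[f(x̂^t) − f(x*)] ≤ μR₀²/2^{t+1}` and
`E[‖x̂^t − x*‖²] ≤ R₀²/2^t` for all `t ≥ 1`; in particular, after
`r = ⌈log₂(μR₀²/ε)⌉ − 1` restarts, `E[f(x̂^r) − f(x*)] ≤ ε`. -/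
theorem restarted_btard_sgd
    {Ω : Type*} [MeasurableSpace Ω] (P : Measure Ω) [IsProbabilityMeasure P]
    {d : ℕ} (f : EuclideanSpace ℝ (Fin d) → ℝ) (μ c ε R₀ : ℝ)
    (hμ : 0 < μ) (hc : 0 < c) (hε : 0 < ε)
    (hdiff : Differentiable ℝ f)
    (hsc : ∀ y z : EuclideanSpace ℝ (Fin d),
      f y + ⟪gradient f y, z - y⟫ + (μ / 2) * ‖z - y‖ ^ 2 ≤ f z)
    (xstar : EuclideanSpace ℝ (Fin d)) (hmin : ∀ y, f xstar ≤ f y)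
    (hgradstar : gradient f xstar = 0)
    (x0 : EuclideanSpace ℝ (Fin d)) (hR₀ : ‖x0 - xstar‖ ≤ R₀)
    (hbig : 2 * ε < μ * R₀ ^ 2)
    (xhat : ℕ → Ω → EuclideanSpace ℝ (Fin d)) (γ K : ℕ → ℝ)
    (hxhat0 : xhat 0 = fun _ => x0)
    (hxmeas : ∀ t, Measurable (xhat t))
    (hfint : ∀ t, Integrable (fun ω => f (xhat t ω)) P)
    (hdistint : ∀ t, Integrable (fun ω => ‖xhat t ω - xstar‖ ^ 2) P)
    (hγK : ∀ t : ℕ, 1 ≤ t → 0 < γ t ∧ 0 < K t ∧ 4 * c / μ ≤ γ t * K t)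
    (hstage : ∀ t : ℕ, 1 ≤ t → ∀ᵐ ω ∂P,
      (P[fun ω' => f (xhat t ω') - f xstar|
          MeasurableSpace.comap (xhat (t - 1)) inferInstance]) ω
        ≤ c * ‖xhat (t - 1) ω - xstar‖ ^ 2 / (γ t * K t)) :
    (∀ t : ℕ, 1 ≤ t →
      (∫ ω, (f (xhat t ω) - f xstar) ∂P) ≤ μ * R₀ ^ 2 / 2 ^ (t + 1) ∧
      (∫ ω, ‖xhat t ω - xstar‖ ^ 2 ∂P) ≤ R₀ ^ 2 / 2 ^ t) ∧
    (∫ ω, (f (xhat (⌈Real.logb 2 (μ * R₀ ^ 2 / ε)⌉₊ - 1) ω) - f xstar) ∂P) ≤ ε := by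
  have hR₀0 : 0 ≤ R₀ := le_trans (norm_nonneg _) hR₀
  -- strong convexity lower bound at the minimizer
  have hlow : ∀ z, (μ / 2) * ‖z - xstar‖ ^ 2 ≤ f z - f xstar := by
    intro z
    have h := hsc xstar z
    rw [hgradstar] at h
    simp only [inner_zero_left, add_zero] at h
    linarith
  -- key stage estimate
  have key : ∀ t : ℕ, 1 ≤ t →
      (∫ ω, (f (xhat t ω) - f xstar) ∂P)
        ≤ (μ / 4) * ∫ ω, ‖xhat (t - 1) ω - xstar‖ ^ 2 ∂P := by
    intro t ht
    obtain ⟨hγ, hK, hγK'⟩ := hγK t ht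
    have hγKpos : 0 < γ t * K t := mul_pos hγ hK
    have hm : MeasurableSpace.comap (xhat (t - 1)) inferInstance ≤ ‹MeasurableSpace Ω› :=
      (hxmeas (t - 1)).comap_le
    have hint : Integrable (fun ω => f (xhat t ω) - f xstar) P :=
      (hfint t).sub (integrable_const _)
    have hrhsint : Integrable
        (fun ω => c * ‖xhat (t - 1) ω - xstar‖ ^ 2 / (γ t * K t)) P :=
      ((hdistint (t - 1)).const_mul c).div_const _
    have h1 : ∫ ω, (f (xhat t ω) - f xstar) ∂P
        = ∫ ω, (P[fun ω' => f (xhat t ω') - f xstar|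
            MeasurableSpace.comap (xhat (t - 1)) inferInstance]) ω ∂P :=
      (integral_condExp hm).symm
    have h2 : ∫ ω, (P[fun ω' => f (xhat t ω') - f xstar|
            MeasurableSpace.comap (xhat (t - 1)) inferInstance]) ω ∂P
        ≤ ∫ ω, c * ‖xhat (t - 1) ω - xstar‖ ^ 2 / (γ t * K t) ∂P :=
      integral_mono_ae integrable_condExp hrhsint (hstage t ht)
    have h3 : ∫ ω, c * ‖xhat (t - 1) ω - xstar‖ ^ 2 / (γ t * K t) ∂P
        = c * (∫ ω, ‖xhat (t - 1) ω - xstar‖ ^ 2 ∂P) / (γ t * K t) := by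
      rw [integral_div, integral_const_mul]
    have hD0 : 0 ≤ ∫ ω, ‖xhat (t - 1) ω - xstar‖ ^ 2 ∂P :=
      integral_nonneg fun ω => by positivity
    have hcoef : c / (γ t * K t) ≤ μ / 4 := by
      rw [div_le_div_iff₀ hγKpos (by norm_num : (0:ℝ) < 4)]
      have h4 : 4 * c ≤ γ t * K t * μ := (div_le_iff₀ hμ).mp hγK'
      linarith
    calc ∫ ω, (f (xhat t ω) - f xstar) ∂P
        ≤ c * (∫ ω, ‖xhat (t - 1) ω - xstar‖ ^ 2 ∂P) / (γ t * K t) := by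
          rw [h1]; rw [← h3]; exact h2
      _ = (c / (γ t * K t)) * ∫ ω, ‖xhat (t - 1) ω - xstar‖ ^ 2 ∂P := by ring
      _ ≤ (μ / 4) * ∫ ω, ‖xhat (t - 1) ω - xstar‖ ^ 2 ∂P :=
          mul_le_mul_of_nonneg_right hcoef hD0
  -- distance controlled by function values
  have dist_step : ∀ t : ℕ,
      (∫ ω, ‖xhat t ω - xstar‖ ^ 2 ∂P)
        ≤ (2 / μ) * ∫ ω, (f (xhat t ω) - f xstar) ∂P := by
    intro t
    have hint : Integrable (fun ω => f (xhat t ω) - f xstar) P :=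
      (hfint t).sub (integrable_const _)
    calc (∫ ω, ‖xhat t ω - xstar‖ ^ 2 ∂P)
        ≤ ∫ ω, (2 / μ) * (f (xhat t ω) - f xstar) ∂P := by
          refine integral_mono (hdistint t) (hint.const_mul _) fun ω => ?_
          rw [div_mul_eq_mul_div, le_div_iff₀ hμ]
          linarith [hlow (xhat t ω)]
      _ = (2 / μ) * ∫ ω, (f (xhat t ω) - f xstar) ∂P := integral_const_mul _ _
  -- distance bound for all t
  have Dbound : ∀ t : ℕ, (∫ ω, ‖xhat t ω - xstar‖ ^ 2 ∂P) ≤ R₀ ^ 2 / 2 ^ t := by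
    intro t
    induction t with
    | zero =>
      simp only [hxhat0, integral_const, measure_univ, probReal_univ, ENNReal.toReal_one, smul_eq_mul,
        one_mul, pow_zero, div_one]
      nlinarith [norm_nonneg (x0 - xstar)]
    | succ n ih =>
      have h1 := key (n + 1) (Nat.le_add_left 1 n)
      simp only [Nat.add_sub_cancel] at h1
      have h2 := dist_step (n + 1)
      have h3 : (∫ ω, ‖xhat (n + 1) ω - xstar‖ ^ 2 ∂P)
          ≤ (2 / μ) * ((μ / 4) * (R₀ ^ 2 / 2 ^ n)) := by
        calc (∫ ω, ‖xhat (n + 1) ω - xstar‖ ^ 2 ∂P)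
            ≤ (2 / μ) * ∫ ω, (f (xhat (n + 1) ω) - f xstar) ∂P := h2
          _ ≤ (2 / μ) * ((μ / 4) * ∫ ω, ‖xhat n ω - xstar‖ ^ 2 ∂P) :=
              mul_le_mul_of_nonneg_left h1 (by positivity)
          _ ≤ (2 / μ) * ((μ / 4) * (R₀ ^ 2 / 2 ^ n)) := by
              have := mul_le_mul_of_nonneg_left ih (le_of_lt (show (0:ℝ) < μ / 4 by positivity))
              exact mul_le_mul_of_nonneg_left this (by positivity)
      have heq : (2 / μ) * ((μ / 4) * (R₀ ^ 2 / 2 ^ n)) = R₀ ^ 2 / 2 ^ (n + 1) := by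
        field_simp
        ring
      rw [← heq]; exact h3
  -- function value bound for t ≥ 1
  have Fbound : ∀ t : ℕ, 1 ≤ t →
      (∫ ω, (f (xhat t ω) - f xstar) ∂P) ≤ μ * R₀ ^ 2 / 2 ^ (t + 1) := by
    intro t ht
    obtain ⟨n, rfl⟩ := Nat.exists_eq_add_of_le ht
    have h1 := key (1 + n) (Nat.le_add_right 1 n)
    have hsub : 1 + n - 1 = n := by omega
    rw [hsub] at h1
    have h2 := Dbound n
    have h3 : (μ / 4) * (∫ ω, ‖xhat n ω - xstar‖ ^ 2 ∂P) ≤ (μ / 4) * (R₀ ^ 2 / 2 ^ n) :=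
      mul_le_mul_of_nonneg_left h2 (by positivity)
    have heq : (μ / 4) * (R₀ ^ 2 / 2 ^ n) = μ * R₀ ^ 2 / 2 ^ (1 + n + 1) := by
      have : (2:ℝ) ^ (1 + n + 1) = 4 * 2 ^ n := by ring
      rw [this]; field_simp
    rw [← heq]; linarith
  refine ⟨fun t ht => ⟨Fbound t ht, Dbound t⟩, ?_⟩
  -- final part
  set N := ⌈Real.logb 2 (μ * R₀ ^ 2 / ε)⌉₊ with hN
  have hx2 : (2:ℝ) < μ * R₀ ^ 2 / ε := by
    rw [lt_div_iff₀ hε]; linarith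
  have hxpos : 0 < μ * R₀ ^ 2 / ε := by linarith
  have hlogb : (1:ℝ) < Real.logb 2 (μ * R₀ ^ 2 / ε) := by
    have := Real.logb_lt_logb (by norm_num : (1:ℝ) < 2) (by norm_num : (0:ℝ) < 2) hx2
    simpa using this
  have hN2 : 2 ≤ N := by
    have : (1:ℕ) < N := by
      rw [hN, Nat.lt_ceil]
      exact_mod_cast hlogb
    omega
  have hr1 : 1 ≤ N - 1 := by omega
  have hrsucc : (N - 1) + 1 = N := by omega
  have hF := Fbound (N - 1) hr1
  rw [hrsucc] at hF
  refine hF.trans ?_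
  have hle : μ * R₀ ^ 2 / ε ≤ (2:ℝ) ^ N := by
    calc μ * R₀ ^ 2 / ε
        = (2:ℝ) ^ Real.logb 2 (μ * R₀ ^ 2 / ε) :=
          (Real.rpow_logb (by norm_num) (by norm_num) hxpos).symm
      _ ≤ (2:ℝ) ^ ((N:ℕ):ℝ) :=
          Real.rpow_le_rpow_of_exponent_le (by norm_num) (Nat.le_ceil _)
      _ = (2:ℝ) ^ (N:ℕ) := Real.rpow_natCast 2 N
  rw [div_le_iff₀ (by positivity : (0:ℝ) < 2 ^ N)]
  rw [div_le_iff₀ hε] at hle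
  linarith
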